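/- Let ε > 0 and let I ⊆ ℝ be an interval. Suppose X, V₁, V₂ : I → ℝ are differentiable, 0 ≤ X(s) < ε⁻² for all s ∈ I, and X′ = V₁, V₁′ = G(X)·V₂², V₂′ = −G(X)·V₁·V₂ on I, where G(η) = −ε²/(1−ε²η). Then the functions s ↦ V₁(s)² + V₂(s)² and s ↦ V₂(s)·(1−ε²X(s)) are constant on I; equivalently, V₂(s)·e^{−W(X(s))} is constant, where W(η) = −ln(1−ε²η). -/

import Mathlib

/-- Conserved quantities (5-7) of the geometrically corrected Knudsen-layer
characteristics: `V₁² + V₂²` and `V₂·(1−ε²X)` (equivalently `V₂·e^{−W(X)}`,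
with `W(η) = −log(1−ε²η)`) are constant along the flow. -/
theorem knudsen_characteristics_conserved
    (ε : ℝ) (hε : 0 < ε) (I : Set ℝ) (hI : Convex ℝ I)
    (X V₁ V₂ : ℝ → ℝ)
    (hXrange : ∀ s ∈ I, 0 ≤ X s ∧ X s < (ε ^ 2)⁻¹)
    (hX : ∀ s ∈ I, HasDerivAt X (V₁ s) s)
    (hV₁ : ∀ s ∈ I, HasDerivAt V₁ ((-ε ^ 2 / (1 - ε ^ 2 * X s)) * (V₂ s) ^ 2) s)
    (hV₂ : ∀ s ∈ I, HasDerivAt V₂ (-((-ε ^ 2 / (1 - ε ^ 2 * X s)) * (V₁ s * V₂ s))) s) :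
    (∀ s ∈ I, ∀ t ∈ I, V₁ s ^ 2 + V₂ s ^ 2 = V₁ t ^ 2 + V₂ t ^ 2) ∧
    (∀ s ∈ I, ∀ t ∈ I, V₂ s * (1 - ε ^ 2 * X s) = V₂ t * (1 - ε ^ 2 * X t)) ∧
    (∀ s ∈ I, ∀ t ∈ I,
      V₂ s * Real.exp (-(-Real.log (1 - ε ^ 2 * X s))) =
        V₂ t * Real.exp (-(-Real.log (1 - ε ^ 2 * X t)))) := by
  have hpos : ∀ s ∈ I, 0 < 1 - ε ^ 2 * X s := by
    intro s hs
    have h2 : (0:ℝ) < ε ^ 2 := by positivity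
    have := (hXrange s hs).2
    have h3 := mul_lt_mul_of_pos_left this h2
    rw [mul_inv_cancel₀ h2.ne'] at h3
    linarith
  -- constancy helper
  have key : ∀ (f f' : ℝ → ℝ), (∀ s ∈ I, HasDerivAt f (f' s) s) →
      (∀ s ∈ I, f' s = 0) → ∀ s ∈ I, ∀ t ∈ I, f s = f t := by
    intro f f' hf hf' s hs t ht
    have := hI.norm_image_sub_le_of_norm_hasDerivWithin_le
      (f' := f') (C := 0)
      (fun x hx => (hf x hx).hasDerivWithinAt)
      (fun x hx => by simp [hf' x hx]) ht hs
    have : ‖f s - f t‖ ≤ 0 := by simpa using this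
    have : f s - f t = 0 := by
      simpa using le_antisymm this (norm_nonneg _)
    linarith [this]
  have h1 : ∀ s ∈ I, ∀ t ∈ I, V₁ s ^ 2 + V₂ s ^ 2 = V₁ t ^ 2 + V₂ t ^ 2 := by
    apply key (fun s => V₁ s ^ 2 + V₂ s ^ 2)
      (fun s => 2 * V₁ s * ((-ε ^ 2 / (1 - ε ^ 2 * X s)) * (V₂ s) ^ 2)
        + 2 * V₂ s * (-((-ε ^ 2 / (1 - ε ^ 2 * X s)) * (V₁ s * V₂ s))))
    · intro s hs
      have := (((hV₁ s hs).pow 2).add ((hV₂ s hs).pow 2))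
      refine HasDerivAt.congr_deriv this ?_
      rw [show (2:ℕ) - 1 = 1 from rfl]; push_cast
      ring
    · intro s hs
      ring
  have h2 : ∀ s ∈ I, ∀ t ∈ I, V₂ s * (1 - ε ^ 2 * X s) = V₂ t * (1 - ε ^ 2 * X t) := by
    apply key (fun s => V₂ s * (1 - ε ^ 2 * X s))
      (fun s => (-((-ε ^ 2 / (1 - ε ^ 2 * X s)) * (V₁ s * V₂ s))) * (1 - ε ^ 2 * X s)
        + V₂ s * (-(ε ^ 2 * V₁ s)))
    · intro s hs
      have hd : HasDerivAt (fun s => 1 - ε ^ 2 * X s) (-(ε ^ 2 * V₁ s)) s := by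
        simpa using ((hX s hs).const_mul (ε ^ 2)).const_sub 1
      exact (hV₂ s hs).mul hd
    · intro s hs
      have h0 := (hpos s hs).ne'
      field_simp
      ring
  refine ⟨h1, h2, fun s hs t ht => ?_⟩
  have es : Real.exp (-(-Real.log (1 - ε ^ 2 * X s))) = 1 - ε ^ 2 * X s := by
    rw [neg_neg, Real.exp_log (hpos s hs)]
  have et : Real.exp (-(-Real.log (1 - ε ^ 2 * X t))) = 1 - ε ^ 2 * X t := by
    rw [neg_neg, Real.exp_log (hpos t ht)]
  rw [es, et]; exact h2 s hs t ht
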